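/- In a category C with a distinguished object A, suppose (i) every arrow in C is a strict epimorphism, (ii) for every object X there exists an arrow A → X, and (iii) the functor Hom(A, -) preserves strict epimorphisms. Then every arrow f : X → A is an isomorphism. -/

import Mathlib

open CategoryTheory

universe v u

/-- Grothendieck's strict epimorphism: `f : X ⟶ Y` is a strict epimorphism if every
`g : X ⟶ Z` that coequalizes all pairs coequalized by `f` factors uniquely through `f`. -/
def IsStrictEpi {C : Type u} [Category.{v} C] {X Y : C} (f : X ⟶ Y) : Prop :=
  ∀ {Z : C} (g : X ⟶ Z),
    (∀ {W : C} (s t : W ⟶ X), s ≫ f = t ≫ f → s ≫ g = t ≫ g) →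
    ∃! h : Y ⟶ Z, f ≫ h = g

lemma IsStrictEpi.epi {C : Type u} [Category.{v} C] {X Y : C} {f : X ⟶ Y}
    (h : IsStrictEpi f) : Epi f := by
  constructor
  intro Z a b hab
  obtain ⟨k, hk1, hk2⟩ := h (f ≫ a) (fun s t hst => by
    rw [← Category.assoc, hst, Category.assoc])
  rw [hk2 a rfl, hk2 b hab.symm]

theorem stmt0 {C : Type u} [Category.{v} C] (A : C)
    (h1 : ∀ {X Y : C} (f : X ⟶ Y), IsStrictEpi f)
    (h2 : ∀ X : C, Nonempty (A ⟶ X))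
    (h3 : ∀ {X Y : C} (f : X ⟶ Y), IsStrictEpi f →
      IsStrictEpi (C := Type v) (X := A ⟶ X) (Y := A ⟶ Y) (TypeCat.ofHom (fun g : A ⟶ X => g ≫ f))) :
    ∀ (X : C) (f : X ⟶ A), IsIso f := by
  intro X f
  have e : Epi (C := Type v) (TypeCat.ofHom (fun g : A ⟶ X => g ≫ f)) := IsStrictEpi.epi (h3 f (h1 f))
  have hsurj : Function.Surjective (fun g : A ⟶ X => g ≫ f) :=
    (epi_iff_surjective _).mp e
  obtain ⟨s, hs⟩ := hsurj (𝟙 A)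
  have hs' : s ≫ f = 𝟙 A := hs
  have es : Epi s := IsStrictEpi.epi (h1 s)
  have hfs : f ≫ s = 𝟙 X := by
    have : s ≫ (f ≫ s) = s ≫ 𝟙 X := by
      rw [← Category.assoc, hs']; simp
    exact es.left_cancellation _ _ this
  exact ⟨s, hfs, hs'⟩
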